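/- arXiv:1310.1566 — 2 statements merged into one kernel-verified Lean document; each statement's English description precedes it below -/
import Mathlib

section
/- Let U be the shift unitary on ℓ²({#} ∪ ℤ) (fixing e_# and sending e_k to e_{k+1}), and let T be a positive trace-class operator with trace 1 satisfying T = U T U*. Then T = P_#, the rank-one projection onto e_#. Hence the unique shift-invariant normal state on the compact operators K(ℓ²({#} ∪ ℤ)) is the vacuum state A ↦ ⟨A e_#, e_#⟩. -/
open scoped ComplexInnerProductSpace

noncomputable section

/-- The Boolean Fock space over `ℓ²(ℤ)`, identified with `ℓ²({#} ∪ ℤ)`. -/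
abbrev BoolSp : Type := lp (fun _ : Option ℤ => ℂ) 2

/-- The canonical orthonormal basis vectors `e_#` (`x = none`) and `e_i` (`x = some i`). -/
def basisVec (x : Option ℤ) : BoolSp := lp.single 2 x 1

/-- The rank-one projection `P_#` onto `e_#`. -/
def vacProj : BoolSp →L[ℂ] BoolSp :=
  (innerSL ℂ (basisVec none)).smulRight (basisVec none)

lemma inner_basisVec (i j : Option ℤ) :
    ⟪basisVec i, basisVec j⟫ = if i = j then (1 : ℂ) else 0 := by
  classical
  rw [basisVec, basisVec, lp.inner_single_left]
  by_cases h : i = j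
  · subst h; simp [lp.single_apply_self]
  · rw [lp.single_apply_ne 2 j 1 h]
    simp [h]

lemma inner_basisVec_apply (i : Option ℤ) (x : BoolSp) :
    ⟪basisVec i, x⟫ = x i := by
  rw [basisVec, lp.inner_single_left]
  simp [RCLike.inner_apply]

/-- Positive operators kill vectors on which their quadratic form vanishes. -/
lemma isPositive_apply_eq_zero {T : BoolSp →L[ℂ] BoolSp} (hpos : T.IsPositive)
    {x : BoolSp} (hx : ⟪x, T x⟫ = 0) : T x = 0 := by
  have hsym : ∀ a b : BoolSp, ⟪T a, b⟫ = ⟪a, T b⟫ :=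
    ContinuousLinearMap.isSelfAdjoint_iff_isSymmetric.mp hpos.isSelfAdjoint
  have key : ∀ y : BoolSp, (⟪y, T x⟫ : ℂ).re = 0 := by
    intro y
    by_contra hb
    set a : ℝ := (⟪y, T y⟫ : ℂ).re with ha_def
    set b : ℝ := (⟪y, T x⟫ : ℂ).re with hb_def
    have ha : 0 ≤ a := (Complex.nonneg_iff.mp (hpos.inner_nonneg_right y)).1
    set t : ℝ := -b / (a + 1) with ht_def
    have hswap : ⟪x, T y⟫ = (starRingEnd ℂ) ⟪y, T x⟫ := by
      rw [← hsym x y, ← inner_conj_symm]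
    have hnn := hpos.inner_nonneg_right (x + (t : ℂ) • y)
    simp only [map_add, map_smul, inner_add_left, inner_add_right, inner_smul_left,
      inner_smul_right, hx, hswap, Complex.conj_ofReal, RCLike.re_to_complex,
      Complex.add_re, Complex.re_ofReal_mul, Complex.conj_re, Complex.zero_re,
      zero_add] at hnn
    have h1 : (0 : ℝ) < a + 1 := by linarith
    have hnn' : 0 ≤ t * b + t * (b + t * a) := by
      have h0 := (Complex.nonneg_iff.mp hnn).1
      simp only [Complex.add_re, Complex.re_ofReal_mul, Complex.conj_re] at h0
      exact h0
    have ht : t * (a + 1) = -b := by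
      rw [ht_def]; field_simp
    have htne : t ≠ 0 := by
      intro h0
      rw [h0, zero_mul] at ht
      exact hb (by linarith)
    have ht2 : (0 : ℝ) < t ^ 2 := by positivity
    have hb' : b = -(t * (a + 1)) := by linarith
    rw [hb'] at hnn'
    nlinarith [hnn', ht2, ha]
  have keyz : ∀ y : BoolSp, ⟪y, T x⟫ = 0 := by
    intro y
    have him := key (Complex.I • y)
    simp only [inner_smul_left, Complex.conj_I, neg_mul, Complex.neg_re, Complex.mul_re,
      Complex.I_re, Complex.I_im, zero_mul, one_mul, zero_sub, neg_neg] at him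
    have hre := key y
    exact Complex.ext hre him
  refine ext_inner_left ℂ fun v => ?_
  rw [keyz v, inner_zero_right]

/-- If `U` is the shift unitary on `ℓ²({#} ∪ ℤ)` (fixing `e_#`, sending `e_k` to
`e_{k+1}`) and `T` is a positive trace-class operator of trace `1` with
`T = U T U*`, then `T = P_#`; hence the corresponding shift-invariant normal state
on the compact operators is the vacuum state `A ↦ ⟨A e_#, e_#⟩`. -/
theorem shift_invariant_normal_state_is_vacuum (U T : BoolSp →L[ℂ] BoolSp)
    (hvac : U (basisVec none) = basisVec none)
    (hshift : ∀ k : ℤ, U (basisVec (some k)) = basisVec (some (k + 1)))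
    (hiso : ∀ x : BoolSp, ‖U x‖ = ‖x‖) (hsurj : Function.Surjective U)
    (hpos : T.IsPositive)
    (htr : HasSum (fun i : Option ℤ => ⟪basisVec i, T (basisVec i)⟫) 1)
    (hinv : T = U ∘L T ∘L (ContinuousLinearMap.adjoint U)) :
    T = vacProj ∧
      ∀ A : BoolSp →L[ℂ] BoolSp,
        HasSum (fun i : Option ℤ => ⟪basisVec i, (T ∘L A) (basisVec i)⟫)
          ⟪basisVec none, A (basisVec none)⟫ := by
  classical
  have hsym : ∀ a b : BoolSp, ⟪T a, b⟫ = ⟪a, T b⟫ :=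
    ContinuousLinearMap.isSelfAdjoint_iff_isSymmetric.mp hpos.isSelfAdjoint
  -- U preserves inner products
  have hUinner : ∀ x y : BoolSp, ⟪U x, U y⟫ = ⟪x, y⟫ := fun x y =>
    (⟨U.toLinearMap, hiso⟩ : BoolSp →ₗᵢ[ℂ] BoolSp).inner_map_map x y
  have hUU : ∀ x : BoolSp, ContinuousLinearMap.adjoint U (U x) = x := by
    intro x
    refine ext_inner_right ℂ fun y => ?_
    rw [ContinuousLinearMap.adjoint_inner_left, hUinner]
  have hadj_some : ∀ k : ℤ,
      ContinuousLinearMap.adjoint U (basisVec (some (k + 1))) = basisVec (some k) := by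
    intro k; rw [← hshift k, hUU]
  -- diagonal entries
  set d : Option ℤ → ℂ := fun i => ⟪basisVec i, T (basisVec i)⟫ with hd
  have hstep : ∀ k : ℤ, d (some (k + 1)) = d (some k) := by
    intro k
    have h := congrArg
      (fun S : BoolSp →L[ℂ] BoolSp => ⟪basisVec (some (k + 1)), S (basisVec (some (k + 1)))⟫) hinv
    simp only [ContinuousLinearMap.coe_comp', Function.comp_apply, hadj_some k] at h
    calc d (some (k + 1)) = ⟪basisVec (some (k + 1)), U (T (basisVec (some k)))⟫ := h
      _ = ⟪ContinuousLinearMap.adjoint U (basisVec (some (k + 1))), T (basisVec (some k))⟫ := by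
          rw [ContinuousLinearMap.adjoint_inner_left]
      _ = d (some k) := by rw [hadj_some k]
  have hconst : ∀ k : ℤ, d (some k) = d (some 0) := by
    intro k
    induction k using Int.induction_on with
    | zero => rfl
    | succ n ih => exact (hstep n).trans ih
    | pred n ih =>
      have h := hstep (-(n : ℤ) - 1)
      rw [show (-(n : ℤ) - 1 + 1) = -n by ring] at h
      rw [← h]
      exact ih
  -- the constant must be zero
  have hzero : ∀ k : ℤ, d (some k) = 0 := by
    have hsum : Summable fun k : ℤ => d (some k) :=
      htr.summable.comp_injective (Option.some_injective ℤ)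
    have hsumc : Summable fun _ : ℤ => d (some 0) :=
      (summable_congr fun k => hconst k).mp hsum
    have hsre : Summable fun _ : ℤ => (d (some 0)).re :=
      hsumc.map Complex.reCLM Complex.reCLM.continuous
    have hnonneg : 0 ≤ (d (some 0)).re :=
      (Complex.nonneg_iff.mp (hpos.inner_nonneg_right (basisVec (some 0)))).1
    have hre0 : (d (some 0)).re = 0 := by
      by_contra h
      have hpos' : 0 < (d (some 0)).re := lt_of_le_of_ne hnonneg (Ne.symm h)
      have : Finite ℤ := Finite.of_summable_const hpos' hsre
      exact not_finite ℤ
    have him0 : (d (some 0)).im = 0 := by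
      have hconj : (starRingEnd ℂ) (d (some 0)) = d (some 0) := by
        show (starRingEnd ℂ) ⟪basisVec (some 0), T (basisVec (some 0))⟫
          = ⟪basisVec (some 0), T (basisVec (some 0))⟫
        rw [inner_conj_symm, hsym]
      have h' := congrArg Complex.im hconj
      rw [Complex.conj_im] at h'
      linarith
    intro k
    rw [hconst k]
    exact Complex.ext hre0 him0
  -- T kills the shifted basis vectors
  have hTzero : ∀ k : ℤ, T (basisVec (some k)) = 0 := fun k =>
    isPositive_apply_eq_zero hpos (hzero k)
  -- trace condition forces d none = 1
  have hdnone : d none = 1 := by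
    have h2 : HasSum d (d none) := by
      apply hasSum_single (f := d) none
      intro i hi
      obtain ⟨k, rfl⟩ : ∃ k : ℤ, i = some k := Option.ne_none_iff_exists'.mp hi
      exact hzero k
    exact h2.unique htr
  -- T on the vacuum vector
  have hTnone : T (basisVec none) = basisVec none := by
    refine lp.ext (funext fun j => ?_)
    rw [← inner_basisVec_apply j, ← inner_basisVec_apply j (basisVec none), inner_basisVec]
    cases j with
    | none => simpa using hdnone
    | some k =>
      rw [← hsym, hTzero k]
      simp
  have hvacProj : ∀ x : BoolSp, vacProj x = ⟪basisVec none, x⟫ • basisVec none := fun x => rfl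
  have hTeq : T = vacProj := by
    refine ContinuousLinearMap.ext fun x => ?_
    refine lp.ext (funext fun j => ?_)
    rw [← inner_basisVec_apply j, ← inner_basisVec_apply j (vacProj x)]
    rw [hvacProj, inner_smul_right, inner_basisVec, ← hsym]
    cases j with
    | none => rw [hTnone]; simp
    | some k => rw [hTzero k]; simp
  refine ⟨hTeq, fun A => ?_⟩
  have hfun : ∀ i : Option ℤ, ⟪basisVec i, (T ∘L A) (basisVec i)⟫
      = if i = none then ⟪basisVec none, A (basisVec none)⟫ else 0 := by
    intro i
    rw [ContinuousLinearMap.coe_comp', Function.comp_apply, ← hsym]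
    cases i with
    | none => rw [hTnone]; simp
    | some k => rw [hTzero k]; simp
  rw [funext hfun]
  exact hasSum_ite_eq none _
end
end

section
/- On the q-deformed Fock space with -1 < q < 1, the creation and annihilation operators satisfy the q-commutation relation a_q(f) a_q†(g) - q a_q†(g) a_q(f) = ⟨g, f⟩ · 1 on the dense span of elementary tensors, for all f, g ∈ H. -/
open scoped ComplexInnerProductSpace

noncomputable section

variable {H : Type*} [NormedAddCommGroup H] [InnerProductSpace ℂ H]

/-- The dense span of elementary tensors of the `q`-Fock space, modelled as the free
vector space on words (lists) of vectors of `H`; the empty list is the vacuum `Ω`. -/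
abbrev FockSpan (H : Type*) := (List H) →₀ ℂ

/-- The creation operator `a_q†(g)`: on an elementary tensor it prepends `g`. -/
def qCre (g : H) : FockSpan H →ₗ[ℂ] FockSpan H :=
  Finsupp.lmapDomain ℂ ℂ (fun l => g :: l)

/-- The `q`-annihilation operator:
`a_q(f)(f₁⊗…⊗fₙ) = Σ_{k=1}^n q^{k-1} ⟨f_k, f⟩ f₁⊗…⊗f_{k-1}⊗f_{k+1}⊗…⊗fₙ`
(with `⟨f_k, f⟩ = ⟪f, f_k⟫` in Mathlib's convention), and `a_q(f) Ω = 0`. -/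
def qAnn (q : ℝ) (f : H) : FockSpan H →ₗ[ℂ] FockSpan H :=
  Finsupp.lift (FockSpan H) ℂ (List H)
    (fun l => ∑ k ∈ Finset.range l.length,
      ((q : ℂ) ^ k * ⟪f, l.getD k 0⟫) • Finsupp.single (l.eraseIdx k) (1 : ℂ))

lemma qAnn_single (q : ℝ) (f : H) (l : List H) :
    qAnn q f (Finsupp.single l 1) = ∑ k ∈ Finset.range l.length,
      ((q : ℂ) ^ k * ⟪f, l.getD k 0⟫) • Finsupp.single (l.eraseIdx k) (1 : ℂ) := by
  simp [qAnn, Finsupp.lift_apply, Finsupp.sum_single_index]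

lemma key (q : ℝ) (f g : H) (l : List H) :
    qAnn q f (qCre g (Finsupp.single l 1)) - (q : ℂ) • qCre g (qAnn q f (Finsupp.single l 1))
      = ⟪f, g⟫ • Finsupp.single l 1 := by
  have h1 : qCre g (Finsupp.single l (1:ℂ)) = Finsupp.single (g :: l) 1 := by
    simp [qCre, Finsupp.lmapDomain_apply, Finsupp.mapDomain_single]
  rw [h1, qAnn_single, qAnn_single]
  rw [List.length_cons, Finset.sum_range_succ']
  simp only [List.getD_cons_succ, List.getD_cons_zero, List.eraseIdx_cons_succ,
    List.eraseIdx_cons_zero, pow_zero, one_mul, pow_succ]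
  rw [map_sum, Finset.smul_sum]
  have h2 : ∀ k, qCre g ((((q:ℂ)^k * ⟪f, l.getD k 0⟫) • Finsupp.single (l.eraseIdx k) (1:ℂ)))
      = ((q:ℂ)^k * ⟪f, l.getD k 0⟫) • Finsupp.single (g :: l.eraseIdx k) (1:ℂ) := by
    intro k
    rw [map_smul]
    congr 1
    simp [qCre, Finsupp.lmapDomain_apply, Finsupp.mapDomain_single]
  simp only [h2]
  have : ∀ k ∈ Finset.range l.length,
      ((q:ℂ)^k * (q:ℂ) * ⟪f, l.getD k 0⟫) • Finsupp.single (g :: l.eraseIdx k) (1:ℂ)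
      = (q:ℂ) • (((q:ℂ)^k * ⟪f, l.getD k 0⟫) • Finsupp.single (g :: l.eraseIdx k) (1:ℂ)) := by
    intro k _
    rw [smul_smul]; ring_nf
  rw [Finset.sum_congr rfl this]
  abel

/-- The `q`-commutation relation
`a_q(f) a_q†(g) - q a_q†(g) a_q(f) = ⟨g, f⟩ · 1` holds on the dense span of
elementary tensors, for `-1 < q < 1`. -/
theorem q_commutation_relation (q : ℝ) (hq₁ : -1 < q) (hq₂ : q < 1) (f g : H)
    (v : FockSpan H) :
    qAnn q f (qCre g v) - (q : ℂ) • qCre g (qAnn q f v) = ⟪f, g⟫ • v := by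
  induction v using Finsupp.induction_linear with
  | zero => simp
  | add a b ha hb =>
    simp only [map_add, smul_add] at *
    rw [← ha, ← hb]; abel
  | single l c =>
    have : Finsupp.single l c = c • Finsupp.single l (1:ℂ) := by simp
    rw [this, map_smul, map_smul, map_smul, map_smul, smul_comm (q:ℂ) c, ← smul_sub,
      key q f g l, smul_comm]

end
end
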